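/- arXiv:0906.3652 — 3 statements merged into one kernel-verified Lean document; each statement's English description precedes it below -/
import Mathlib

section
/- A local central limit theorem (De Moivre–Laplace) holds for the total length of dimers: for every B > 0 and every ε > 0 there exists N₀ such that for all integers N ≥ N₀ and all integers h satisfying |h - (1/3)(N-1)| ≤ B·√((2/9)(N-1)), one has | R_N(h) · √((4/9)π(N-1)) · exp( (h - (1/3)(N-1))² / ((4/9)(N-1)) ) - 1 | < ε, where R_N(h) := Σ_{(s,t): t-s=h} P̃_N(s,t). -/
open Real

/-- The hard-dimer probability weights `P̃_N(s,t)`: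
`P̃_N(0,0) = (2/3)^{N-1}`,
`P̃_N(s,t) = (2/3)^{N-1} · C(N-t+s, s) · C(t-s-1, s-1) · 2^{-(t-s)}`
for `1 ≤ s ≤ ⌊t/2⌋` and `1 ≤ t ≤ N`, and `P̃_N(s,t) = 0` otherwise. -/
noncomputable def Ptilde (N s t : ℕ) : ℝ :=
  if s = 0 ∧ t = 0 then (2 / 3 : ℝ) ^ (N - 1)
  else if 1 ≤ s ∧ s ≤ t / 2 ∧ 1 ≤ t ∧ t ≤ N then
    (2 / 3 : ℝ) ^ (N - 1) * ((N - t + s).choose s : ℝ)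
      * ((t - s - 1).choose (s - 1) : ℝ) * (1 / 2 : ℝ) ^ (t - s)
  else 0

lemma vand (N h : ℕ) (h1 : 1 ≤ h) (h2 : h < N) :
    ∑ i ∈ Finset.range h, (N - h).choose (i+1) * (h-1).choose i = (N-1).choose h := by
  have e : N - 1 = (N - h) + (h - 1) := by omega
  rw [e, Nat.add_choose_eq, Finset.Nat.sum_antidiagonal_eq_sum_range_succ_mk,
    Finset.sum_range_succ']
  have f0 : (N - h).choose 0 * (h-1).choose (h - 0) = 0 := by
    simp [Nat.choose_eq_zero_of_lt (show h - 1 < h by omega)]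
  rw [f0, add_zero]
  apply Finset.sum_congr rfl
  intro i hi
  simp only [Finset.mem_range] at hi
  congr 1
  rw [show h - (i+1) = (h-1) - i by omega, Nat.choose_symm (by omega : i ≤ h - 1)]

lemma tsum_Ptilde (N h : ℕ) (h1 : 1 ≤ h) (h2 : h < N) :
    ∑' s : ℕ, Ptilde N s (s+h) = ((N-1).choose h : ℝ) * (1/3)^h * (2/3)^(N-1-h) := by
  have hdiv : ∀ s t : ℕ, s ≤ (s + t) / 2 ↔ s ≤ t := by
    intro s t
    rw [Nat.le_div_iff_mul_le (by norm_num)]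
    omega
  have hside : ∀ s ∉ Finset.range (h+1), Ptilde N s (s+h) = 0 := by
    intro s hs
    simp only [Finset.mem_range, not_lt] at hs
    unfold Ptilde
    rw [if_neg (by omega), if_neg (by rw [hdiv]; omega)]
  rw [tsum_eq_sum hside]
  rw [Finset.sum_range_succ']
  have f0 : Ptilde N 0 (0 + h) = 0 := by
    unfold Ptilde
    rw [if_neg (by omega), if_neg (by omega)]
  rw [f0, add_zero]
  have hterm : ∀ i ∈ Finset.range h, Ptilde N (i+1) ((i+1) + h)
      = (2/3 : ℝ)^(N-1) * (1/2)^h * ((N-h).choose (i+1) * (h-1).choose i : ℕ) := by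
    intro i hi
    simp only [Finset.mem_range] at hi
    unfold Ptilde
    rw [if_neg (by omega)]
    by_cases hc : (i+1) + h ≤ N
    · rw [if_pos ⟨by omega, by rw [hdiv]; omega, by omega, hc⟩]
      rw [show N - ((i+1)+h) + (i+1) = N - h by omega,
        show (i+1) + h - (i+1) - 1 = h - 1 by omega,
        show (i+1) + h - (i+1) = h by omega]
      push_cast
      ring
    · rw [if_neg (by omega)]
      rw [Nat.choose_eq_zero_of_lt (by omega : N - h < i + 1)]
      push_cast
      ring
  rw [Finset.sum_congr rfl hterm, ← Finset.mul_sum, ← Nat.cast_sum, vand N h h1 h2]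
  have : (2/3 : ℝ)^(N-1) = (2/3 : ℝ)^(N-1-h) * (2/3 : ℝ)^h := by
    rw [← pow_add]
    congr 1
    omega
  rw [this]
  have h23 : ((2:ℝ)/3)^h * ((1:ℝ)/2)^h = (1/3 : ℝ)^h := by rw [← mul_pow]; norm_num
  calc (2/3 : ℝ) ^ (N-1-h) * (2/3 : ℝ) ^ h * (1/2 : ℝ)^h * ((N - 1).choose h : ℕ)
      = ((N - 1).choose h : ℕ) * ((2/3 : ℝ)^h * (1/2 : ℝ)^h) * (2/3 : ℝ) ^ (N-1-h) := by ring
    _ = _ := by rw [h23]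

lemma log_taylor_bound {u : ℝ} (hu : |u| ≤ 1/2) :
    |(1+u) * Real.log (1+u) - (u + u^2/2)| ≤ 4 * |u|^3 := by
  have h1 : |(-u)| < 1 := by rw [abs_neg]; linarith
  have h2 := Real.abs_log_sub_add_sum_range_le h1 2
  have hsum : (∑ i ∈ Finset.range 2, (-u) ^ (i + 1) / (i + 1)) = -u + u^2/2 := by
    rw [Finset.sum_range_succ, Finset.sum_range_succ, Finset.sum_range_zero]
    norm_num
  rw [hsum, show (1 : ℝ) - -u = 1 + u by ring, abs_neg] at h2
  set R := Real.log (1+u) - u + u^2/2 with hR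
  have hRb : |R| ≤ 2 * |u|^3 := by
    have e1 : (-u + u^2/2) + Real.log (1+u) = R := by rw [hR]; ring
    rw [e1] at h2
    have e2 : |u|^3 / (1 - |u|) ≤ 2*|u|^3 := by
      rw [div_le_iff₀ (by linarith [abs_nonneg u] : (0:ℝ) < 1 - |u|)]
      nlinarith [abs_nonneg u, pow_nonneg (abs_nonneg u) 3]
    calc |R| ≤ |u|^(2+1)/(1-|u|) := h2
      _ = |u|^3/(1-|u|) := by norm_num
      _ ≤ 2*|u|^3 := e2
  have key : (1+u) * Real.log (1+u) - (u + u^2/2) = (1+u) * R - u^3/2 := by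
    rw [hR]; ring
  rw [key]
  have h3 : |(1+u)*R - u^3/2| ≤ |1 + u| * |R| + |u|^3/2 := by
    calc |(1+u)*R - u^3/2| ≤ |(1+u)*R| + |u^3/2| := abs_sub _ _
      _ = |1 + u| * |R| + |u|^3/2 := by rw [abs_mul, abs_div, abs_pow]; norm_num
  have h4 : |1+u| ≤ 3/2 := by
    rw [abs_le] at hu ⊢; constructor <;> linarith
  nlinarith [abs_nonneg R, pow_nonneg (abs_nonneg u) 3, abs_nonneg (1+u)]

lemma X_bound {a b c s η θ : ℝ} (hs : 1 ≤ s) (hθ : θ ≤ 1/2) (hθ0 : 0 ≤ θ)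
    (hη : 16*θ ≤ η) (ha : |a - s| ≤ s*θ) (hb : |b - s| ≤ s*θ) (hc : |c - s| ≤ s*θ) :
    |a*s/(b*c) - 1| ≤ η := by
  rw [abs_le] at ha hb hc
  have hs0 : (0:ℝ) < s := by linarith
  have hsθ : s*θ ≤ s/2 := by nlinarith
  have hb2 : s/2 ≤ b := by linarith
  have hc2 : s/2 ≤ c := by linarith
  have hbc : s^2/4 ≤ b*c := by nlinarith [mul_le_mul hb2 hc2 (by linarith) (by linarith)]
  have hbc0 : (0:ℝ) < b*c := by nlinarith
  have hbcl : (s - s*θ)*(s - s*θ) ≤ b*c :=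
    mul_le_mul (by linarith) (by linarith) (by linarith) (by linarith)
  have hbcu : b*c ≤ (s + s*θ)*(s + s*θ) :=
    mul_le_mul (by linarith) (by linarith) (by linarith) (by nlinarith)
  have hasu : a*s ≤ (s + s*θ)*s := mul_le_mul_of_nonneg_right (by linarith) (by linarith)
  have hasl : (s - s*θ)*s ≤ a*s := mul_le_mul_of_nonneg_right (by linarith) (by linarith)
  have h1 : |a*s - b*c| ≤ 4*s^2*θ := by
    rw [abs_le]; constructor <;> nlinarith [sq_nonneg (s*θ), sq_nonneg s]
  have e : a*s/(b*c) - 1 = (a*s - b*c)/(b*c) := by rw [sub_div, div_self hbc0.ne']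
  rw [e, abs_div, abs_of_pos hbc0, div_le_iff₀ hbc0]
  nlinarith [h1]

lemma near_abs {y η : ℝ} (hy : |y - 1| ≤ η) (hη : η ≤ 1/2) : |y| ≤ 3/2 := by
  have : |y| ≤ |y - 1| + 1 := by
    calc |y| = |(y-1) + 1| := by ring_nf
      _ ≤ |y-1| + |(1:ℝ)| := abs_add_le _ _
      _ = |y-1| + 1 := by norm_num
  linarith

lemma near_mul {x y ηx ηy : ℝ} (hx : |x-1| ≤ ηx) (hy : |y-1| ≤ ηy) (hy1 : |y| ≤ 3/2) :
    |x*y - 1| ≤ ηx*(3/2) + ηy := by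
  have e : x*y - 1 = (x-1)*y + (y-1) := by ring
  rw [e]
  have h1 : |(x-1)*y + (y-1)| ≤ |(x-1)*y| + |y - 1| := abs_add_le _ _
  rw [abs_mul] at h1
  have h2 := mul_le_mul hx hy1 (abs_nonneg y) (le_trans (abs_nonneg _) hx)
  linarith

lemma mul3_near {X Y Z η : ℝ} (hX : |X-1| ≤ η) (hY : |Y-1| ≤ η) (hZ : |Z-1| ≤ η)
    (hη : η ≤ 1/2) : |X*Y*Z - 1| ≤ 5*η := by
  have hη0 : 0 ≤ η := le_trans (abs_nonneg _) hX
  have hXY : |X*Y - 1| ≤ (5/2)*η := by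
    have := near_mul hX hY (near_abs hY hη)
    linarith
  have := near_mul hXY hZ (near_abs hZ hη)
  linarith

lemma W_bound {x d : ℝ} (hx : 0 < x) (hd : |d| ≤ x/12) :
    |(x/3+d) * Real.log ((x/3)/(x/3+d)) + (2*x/3-d) * Real.log ((2*x/3)/(2*x/3-d))
      + 9*d^2/(4*x)| ≤ 45*|d|^3/x^2 := by
  have hdl := neg_abs_le d
  have hdu := le_abs_self d
  have hd3 : (0:ℝ) ≤ |d|^3 := by positivity
  have hk' : 0 < x/3 + d := by linarith
  have hm' : 0 < 2*x/3 - d := by linarith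
  set u := 3*d/x with hu
  set v := -(3*d)/(2*x) with hv
  have hu_eq : |u| = 3*|d|/x := by
    rw [hu, abs_div, abs_of_pos hx, abs_mul]; norm_num
  have hv_eq : |v| = 3*|d|/(2*x) := by
    rw [hv, abs_div, abs_of_pos (by linarith : (0:ℝ) < 2*x), abs_neg, abs_mul]; norm_num
  have hu_abs : |u| ≤ 1/2 := by rw [hu_eq, div_le_iff₀ hx]; linarith
  have hv_abs : |v| ≤ 1/2 := by rw [hv_eq, div_le_iff₀ (by linarith : (0:ℝ) < 2*x)]; linarith
  have hLu := log_taylor_bound hu_abs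
  have hLv := log_taylor_bound hv_abs
  have h1u : 0 < 1 + u := by
    have := neg_abs_le u
    linarith
  have h1v : 0 < 1 + v := by
    have := neg_abs_le v
    linarith
  have hlogk : Real.log ((x/3)/(x/3+d)) = -Real.log (1+u) := by
    have e : (x/3)/(x/3+d) = (1+u)⁻¹ := by
      rw [inv_eq_one_div, div_eq_div_iff (ne_of_gt hk') (ne_of_gt h1u), hu]
      field_simp
    rw [e, Real.log_inv]
  have hlogm : Real.log ((2*x/3)/(2*x/3-d)) = -Real.log (1+v) := by
    have e : (2*x/3)/(2*x/3-d) = (1+v)⁻¹ := by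
      rw [inv_eq_one_div, div_eq_div_iff (ne_of_gt hm') (ne_of_gt h1v), hv]
      field_simp
      ring
    rw [e, Real.log_inv]
  have hA : |(x/3+d) * Real.log ((x/3)/(x/3+d)) + (d + 3*d^2/(2*x))| ≤ 36*|d|^3/x^2 := by
    have eA : (x/3+d) * Real.log ((x/3)/(x/3+d)) + (d + 3*d^2/(2*x))
        = -((x/3) * ((1+u)*Real.log (1+u) - (u + u^2/2))) := by
      rw [hlogk, hu]
      field_simp
      ring
    rw [eA, abs_neg, abs_mul, abs_of_pos (show (0:ℝ) < x/3 by linarith)]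
    calc x/3 * |(1+u)*Real.log (1+u) - (u + u^2/2)| ≤ x/3 * (4*|u|^3) := by
          exact mul_le_mul_of_nonneg_left hLu (by linarith)
      _ = 36*|d|^3/x^2 := by
          rw [hu_eq]
          field_simp
          ring
  have hB : |(2*x/3-d) * Real.log ((2*x/3)/(2*x/3-d)) + (-d + 3*d^2/(4*x))| ≤ 9*|d|^3/x^2 := by
    have eB : (2*x/3-d) * Real.log ((2*x/3)/(2*x/3-d)) + (-d + 3*d^2/(4*x))
        = -((2*x/3) * ((1+v)*Real.log (1+v) - (v + v^2/2))) := by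
      rw [hlogm, hv]
      field_simp
      ring
    rw [eB, abs_neg, abs_mul, abs_of_pos (show (0:ℝ) < 2*x/3 by linarith)]
    calc 2*x/3 * |(1+v)*Real.log (1+v) - (v + v^2/2)| ≤ 2*x/3 * (4*|v|^3) := by
          exact mul_le_mul_of_nonneg_left hLv (by linarith)
      _ = 9*|d|^3/x^2 := by
          rw [hv_eq]
          field_simp
          ring
  have esplit : (x/3+d) * Real.log ((x/3)/(x/3+d)) + (2*x/3-d) * Real.log ((2*x/3)/(2*x/3-d))
      + 9*d^2/(4*x)
      = ((x/3+d) * Real.log ((x/3)/(x/3+d)) + (d + 3*d^2/(2*x)))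
        + ((2*x/3-d) * Real.log ((2*x/3)/(2*x/3-d)) + (-d + 3*d^2/(4*x))) := by
    field_simp
    ring
  rw [esplit]
  calc |_ + _| ≤ _ := abs_add_le _ _
    _ ≤ 36*|d|^3/x^2 + 9*|d|^3/x^2 := add_le_add hA hB
    _ = 45*|d|^3/x^2 := by ring

lemma sqrt_near {R η : ℝ} (hR : |R - 1| ≤ η) (hη : η ≤ 1/2) : |Real.sqrt R - 1| ≤ η := by
  have hη0 : 0 ≤ η := le_trans (abs_nonneg _) hR
  rw [abs_le] at hR
  have hR0 : (0:ℝ) ≤ R := by linarith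
  have hs := Real.sq_sqrt hR0
  have hs0 : 0 ≤ Real.sqrt R := Real.sqrt_nonneg R
  have key : (Real.sqrt R - 1)*(Real.sqrt R + 1) = R - 1 := by nlinarith
  have h2 : |Real.sqrt R - 1| * (Real.sqrt R + 1) = |R - 1| := by
    rw [← abs_of_pos (show (0:ℝ) < Real.sqrt R + 1 by linarith), ← abs_mul, key]
  have h3 : |R - 1| ≤ η := abs_le.mpr hR
  nlinarith [abs_nonneg (Real.sqrt R - 1)]

lemma stirling_fact (n : ℕ) (hn : 1 ≤ n) :
    (Nat.factorial n : ℝ) = Stirling.stirlingSeq n * (Real.sqrt (2*n) * ((n:ℝ)/Real.exp 1)^n) := by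
  have h1 : (0:ℝ) < Real.sqrt (2*n) * ((n:ℝ)/Real.exp 1)^n := by
    have : (0:ℝ) < (n:ℝ) := by exact_mod_cast hn
    positivity
  rw [Stirling.stirlingSeq]
  field_simp

lemma factorize (n k m : ℕ) (hk : 1 ≤ k) (hm : 1 ≤ m) (hkm : k + m = n) (E : ℝ) :
    (n.choose k : ℝ) * (1/3)^k * (2/3)^m * Real.sqrt (4/9*Real.pi*(n:ℝ)) * E
    = (Stirling.stirlingSeq n * Real.sqrt Real.pi
        / (Stirling.stirlingSeq k * Stirling.stirlingSeq m))
      * Real.sqrt ((n:ℝ)^2 * (2/9) / ((k:ℝ)*(m:ℝ)))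
      * (((n:ℝ)^n * (1/3:ℝ)^k * (2/3:ℝ)^m / ((k:ℝ)^k * (m:ℝ)^m)) * E) := by
  have hn : 1 ≤ n := by omega
  have hkR : (0:ℝ) < (k:ℝ) := by exact_mod_cast hk
  have hmR : (0:ℝ) < (m:ℝ) := by exact_mod_cast hm
  have hnR : (0:ℝ) < (n:ℝ) := by exact_mod_cast hn
  have hkn : k ≤ n := by omega
  have hnm : (n:ℝ) = (k:ℝ) + (m:ℝ) := by exact_mod_cast hkm.symm
  have hchoose : (n.choose k : ℝ) = (Nat.factorial n : ℝ) / ((Nat.factorial k : ℝ) * (Nat.factorial (n-k) : ℝ)) :=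
    Nat.cast_choose ℝ hkn
  have hnk : n - k = m := by omega
  rw [hnk] at hchoose
  -- sqrt identity
  have hπ : (0:ℝ) < Real.pi := Real.pi_pos
  have hsq : Real.sqrt ((n:ℝ)^2 * (2/9) / ((k:ℝ)*(m:ℝ)))
      = Real.sqrt (2*(n:ℝ)) * Real.sqrt (4/9*Real.pi*(n:ℝ))
        / (Real.sqrt Real.pi * (Real.sqrt (2*(k:ℝ)) * Real.sqrt (2*(m:ℝ)))) := by
    rw [← Real.sqrt_mul (by positivity), ← Real.sqrt_mul (by positivity),
      ← Real.sqrt_mul (by positivity), ← Real.sqrt_div (by positivity)]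
    congr 1
    field_simp
    ring
  have hs_k : (0:ℝ) < Stirling.stirlingSeq k := by
    have := Stirling.stirlingSeq'_pos (k-1)
    rwa [Nat.sub_add_cancel hk] at this
  have hs_m : (0:ℝ) < Stirling.stirlingSeq m := by
    have := Stirling.stirlingSeq'_pos (m-1)
    rwa [Nat.sub_add_cancel hm] at this
  have he : (0:ℝ) < Real.exp 1 := Real.exp_pos 1
  have hsq2k : (0:ℝ) < Real.sqrt (2*(k:ℝ)) := Real.sqrt_pos.mpr (by positivity)
  have hsq2m : (0:ℝ) < Real.sqrt (2*(m:ℝ)) := Real.sqrt_pos.mpr (by positivity)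
  have hsqπ : (0:ℝ) < Real.sqrt Real.pi := Real.sqrt_pos.mpr hπ
  rw [hchoose, stirling_fact n hn, stirling_fact k hk, stirling_fact m hm, hsq]
  rw [div_pow ((n:ℝ)), div_pow ((k:ℝ)), div_pow ((m:ℝ))]
  have hepow : Real.exp 1 ^ n = Real.exp 1 ^ k * Real.exp 1 ^ m := by
    rw [← pow_add, hkm]
  rw [hepow]
  field_simp

lemma Z_exp (k m : ℕ) (x : ℝ) (hx : 0 < x) (hk : 0 < (k:ℝ)) (hm : 0 < (m:ℝ)) :
    x^(k+m) * (1/3:ℝ)^k * (2/3:ℝ)^m / ((k:ℝ)^k * (m:ℝ)^m)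
    = Real.exp ((k:ℝ) * Real.log ((x/3)/(k:ℝ)) + (m:ℝ) * Real.log ((2*x/3)/(m:ℝ))) := by
  have e1 : Real.exp ((k:ℝ) * Real.log ((x/3)/(k:ℝ))) = ((x/3)/(k:ℝ))^k := by
    rw [Real.exp_nat_mul, Real.exp_log (by positivity)]
  have e2 : Real.exp ((m:ℝ) * Real.log ((2*x/3)/(m:ℝ))) = ((2*x/3)/(m:ℝ))^m := by
    rw [Real.exp_nat_mul, Real.exp_log (by positivity)]
  rw [Real.exp_add, e1, e2, pow_add]
  field_simp
  rw [div_pow x (3*(k:ℝ)), div_pow (2*x) (3*(m:ℝ)), mul_pow (3:ℝ) ((k:ℝ)), mul_pow (3:ℝ) ((m:ℝ)), mul_pow (2:ℝ) x]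
  have hk' : (k:ℝ)^k ≠ 0 := by positivity
  have hm' : (m:ℝ)^m ≠ 0 := by positivity
  field_simp
  rw [show (1/3:ℝ)^k*(2/3)^m*3^k*3^m = ((1/3)*3)^k*((2/3)*3)^m by rw [mul_pow, mul_pow]; ring]
  norm_num

set_option maxHeartbeats 1000000 in
lemma binom_clt (B ε : ℝ) (hB : 0 < B) (hε : 0 < ε) :
    ∃ N₀ : ℕ, ∀ n : ℕ, N₀ ≤ n → ∀ k : ℕ,
      |(k:ℝ) - 1/3*(n:ℝ)| ≤ B * Real.sqrt (2/9*(n:ℝ)) →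
      1 ≤ k ∧ k + 1 ≤ n ∧
      |(n.choose k : ℝ) * (1/3)^k * (2/3)^(n-k) * Real.sqrt (4/9*Real.pi*(n:ℝ))
        * Real.exp (((k:ℝ) - 1/3*(n:ℝ))^2 / (4/9*(n:ℝ))) - 1| < ε := by
  have hπ3 := Real.pi_gt_three
  have hπ1 : (1:ℝ) ≤ Real.sqrt Real.pi := by
    rw [show (1:ℝ) = Real.sqrt 1 by simp]
    exact Real.sqrt_le_sqrt (by linarith)
  set η := min (ε/6) (1/2) with hηdef
  clear_value η
  have hη0 : 0 < η := by rw [hηdef]; exact lt_min (by linarith) one_half_pos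
  have hη2 : η ≤ 1/2 := by rw [hηdef]; exact min_le_right _ _
  set θ := min (η/16) (1/2) with hθdef
  clear_value θ
  have hθ0 : 0 < θ := by rw [hθdef]; exact lt_min (by linarith) one_half_pos
  obtain ⟨M, hM⟩ := (Metric.tendsto_atTop.mp Stirling.tendsto_stirlingSeq_sqrt_pi)
    (Real.sqrt Real.pi * θ) (by positivity)
  set θz := min (η/2) 1 with hθzdef
  clear_value θz
  have hθz0 : 0 < θz := by rw [hθzdef]; exact lt_min (by linarith) one_pos
  set θy := min η (1/2) with hθydef
  clear_value θy
  have hθy0 : 0 < θy := by rw [hθydef]; exact lt_min hη0 one_half_pos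
  set C : ℝ := max (max (144*B^2) ((45*B^3/θz)^2)) (((3*B+8*B^2)/θy)^2) with hCdef
  clear_value C
  refine ⟨max (4*M+4) (⌈C⌉₊ + 1), ?_⟩
  intro n hn k hk
  have hnM : 4*M+4 ≤ n := le_trans (le_max_left _ _) hn
  have hnC : ⌈C⌉₊ + 1 ≤ n := le_trans (le_max_right _ _) hn
  set x := (n:ℝ) with hxdef
  clear_value x
  have hx1 : (1:ℝ) ≤ x := by
    have h1 : 1 ≤ n := by omega
    rw [hxdef]
    exact_mod_cast h1
  have hx0 : (0:ℝ) < x := by linarith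
  have hxC : C ≤ x := by
    have h1 : C ≤ (⌈C⌉₊ : ℝ) := Nat.le_ceil C
    have h2 : ((⌈C⌉₊ + 1 : ℕ) : ℝ) ≤ x := by rw [hxdef]; exact_mod_cast hnC
    push_cast at h2
    linarith
  rw [hCdef] at hxC
  have hxc2 : 144*B^2 ≤ x := le_trans (le_trans (le_max_left _ _) (le_max_left _ _)) hxC
  have hxc3 : (45*B^3/θz)^2 ≤ x := le_trans (le_trans (le_max_right _ _) (le_max_left _ _)) hxC
  have hxc4 : ((3*B+8*B^2)/θy)^2 ≤ x := le_trans (le_max_right _ _) hxC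
  set d := (k:ℝ) - 1/3*x with hddef
  clear_value d
  have hsx0 : (0:ℝ) < Real.sqrt x := Real.sqrt_pos.mpr hx0
  have hsq_x : Real.sqrt x * Real.sqrt x = x := Real.mul_self_sqrt hx0.le
  have hdx : |d| ≤ B * Real.sqrt x := by
    refine le_trans hk ?_
    have h1 : Real.sqrt (2/9*x) ≤ Real.sqrt x := Real.sqrt_le_sqrt (by linarith)
    exact mul_le_mul_of_nonneg_left h1 hB.le
  have hsx : 12*B ≤ Real.sqrt x := by
    have h1 : Real.sqrt (144*B^2) ≤ Real.sqrt x := Real.sqrt_le_sqrt hxc2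
    rwa [show (144:ℝ)*B^2 = (12*B)^2 by ring, Real.sqrt_sq (by positivity)] at h1
  have hd12 : |d| ≤ x/12 := by
    calc |d| ≤ B * Real.sqrt x := hdx
      _ ≤ (Real.sqrt x/12) * Real.sqrt x :=
          mul_le_mul_of_nonneg_right (by linarith) hsx0.le
      _ = x/12 := by rw [div_mul_eq_mul_div, hsq_x]
  have hdl := neg_abs_le d
  have hdu := le_abs_self d
  have hkd : (k:ℝ) = x/3 + d := by rw [hddef]; ring
  have hkl : x/4 ≤ (k:ℝ) := by rw [hkd]; linarith
  have hku : (k:ℝ) ≤ 5*x/12 := by rw [hkd]; linarith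
  have hk1 : 1 ≤ k := by
    have : (0:ℝ) < (k:ℝ) := by linarith
    exact_mod_cast Nat.cast_pos.mp this
  have hkltn : k < n := by
    have : (k:ℝ) < (n:ℝ) := by rw [← hxdef]; linarith
    exact_mod_cast this
  refine ⟨hk1, by omega, ?_⟩
  set m := n - k with hmdef
  clear_value m
  have hkm : k + m = n := by omega
  have hm1 : 1 ≤ m := by omega
  have hmR : (m:ℝ) = x - (k:ℝ) := by
    rw [hmdef, hxdef, Nat.cast_sub (le_of_lt hkltn)]
  have hmd : (m:ℝ) = 2*x/3 - d := by rw [hmR, hkd]; ring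
  have hml : x/2 ≤ (m:ℝ) := by rw [hmR]; linarith
  -- Stirling index bounds
  have hMx : (4*(M:ℝ)+4) ≤ x := by
    rw [hxdef]
    exact_mod_cast hnM
  have hkM : M ≤ k := by
    have : (M:ℝ) ≤ (k:ℝ) := by linarith
    exact_mod_cast this
  have hmM : M ≤ m := by
    have : (M:ℝ) ≤ (m:ℝ) := by linarith
    exact_mod_cast this
  have hnM' : M ≤ n := by omega
  have hsa : |Stirling.stirlingSeq n - Real.sqrt Real.pi| ≤ Real.sqrt Real.pi * θ :=
    le_of_lt (by have := hM n hnM'; rwa [Real.dist_eq] at this)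
  have hsb : |Stirling.stirlingSeq k - Real.sqrt Real.pi| ≤ Real.sqrt Real.pi * θ :=
    le_of_lt (by have := hM k hkM; rwa [Real.dist_eq] at this)
  have hsc : |Stirling.stirlingSeq m - Real.sqrt Real.pi| ≤ Real.sqrt Real.pi * θ :=
    le_of_lt (by have := hM m hmM; rwa [Real.dist_eq] at this)
  -- factorization
  rw [hxdef, factorize n k m hk1 hm1 hkm _, ← hxdef]
  -- X bound
  have hX : |Stirling.stirlingSeq n * Real.sqrt Real.pi
      / (Stirling.stirlingSeq k * Stirling.stirlingSeq m) - 1| ≤ η :=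
    X_bound hπ1 (by rw [hθdef]; exact min_le_right _ _) hθ0.le
      (by rw [hθdef]; have := min_le_left (η/16) (1/2:ℝ); linarith) hsa hsb hsc
  -- Y bound
  have hkm0 : (0:ℝ) < (k:ℝ)*(m:ℝ) := mul_pos (by linarith) (by linarith)
  have hsxy : (3*B+8*B^2)/θy ≤ Real.sqrt x := by
    have h1 : Real.sqrt (((3*B+8*B^2)/θy)^2) ≤ Real.sqrt x := Real.sqrt_le_sqrt hxc4
    rwa [Real.sqrt_sq (by positivity)] at h1
  have hRb : |x^2 * (2/9) / ((k:ℝ)*(m:ℝ)) - 1| ≤ θy := by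
    have e : x^2 * (2/9) / ((k:ℝ)*(m:ℝ)) - 1 = (d^2 - d*x/3) / ((k:ℝ)*(m:ℝ)) := by
      rw [div_sub_one (ne_of_gt hkm0)]
      congr 1
      rw [hkd, hmd]
      ring
    rw [e, abs_div, abs_of_pos hkm0, div_le_iff₀ hkm0]
    have h8 : x^2/8 ≤ (k:ℝ)*(m:ℝ) := by
      calc x^2/8 = (x/4)*(x/2) := by ring
        _ ≤ (k:ℝ)*(m:ℝ) := mul_le_mul hkl hml (by linarith) (by linarith)
    have hnum : |d^2 - d*x/3| ≤ d^2 + |d| * x/3 := by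
      calc |d^2 - d*x/3| ≤ |d^2| + |d * x/3| := abs_sub _ _
        _ = d^2 + |d| * x/3 := by
            rw [abs_of_nonneg (sq_nonneg d), abs_div, abs_mul, abs_of_pos hx0]
            norm_num
    have hd2 : d^2 ≤ B^2*x := by
      have h := mul_le_mul hdx hdx (abs_nonneg d) (by positivity)
      calc d^2 = |d| * |d| := by rw [abs_mul_abs_self, pow_two]
        _ ≤ (B*Real.sqrt x)*(B*Real.sqrt x) := h
        _ = B^2*(Real.sqrt x*Real.sqrt x) := by ring
        _ = B^2*x := by rw [hsq_x]
    have hbx : |d| * x/3 ≤ B*Real.sqrt x*x/3 := by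
      have := mul_le_mul_of_nonneg_right hdx (by positivity : (0:ℝ) ≤ x/3)
      nlinarith only [this]
    -- θy * (k*m) ≥ θy * x²/8 ≥ (3B+8B²)/√x * x²/8 ≥ B²x + B√x x/3
    have hθyx : (3*B+8*B^2) ≤ θy * Real.sqrt x := by
      rw [div_le_iff₀ hθy0] at hsxy
      linarith [hsxy]
    have key : B^2*x + B*Real.sqrt x*x/3 ≤ θy * (x^2/8) := by
      have e2 : x^2 = (Real.sqrt x * Real.sqrt x)*x := by rw [hsq_x]; ring
      rw [e2]
      have hsx1 : 1 ≤ Real.sqrt x := by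
        rw [show (1:ℝ) = Real.sqrt 1 by simp]
        exact Real.sqrt_le_sqrt hx1
      have hsxx : (0:ℝ) ≤ Real.sqrt x * x := by positivity
      have k1 : (3*B+8*B^2) * (Real.sqrt x * x) ≤ (θy*Real.sqrt x) * (Real.sqrt x * x) :=
        mul_le_mul_of_nonneg_right hθyx hsxx
      have k2 : B^2*x ≤ B^2*(Real.sqrt x*x) := by
        have := mul_nonneg (mul_nonneg (sq_nonneg B) hx0.le) (sub_nonneg.mpr hsx1)
        nlinarith only [this]
      nlinarith only [k1, k2, mul_nonneg (mul_nonneg hB.le hsx0.le) hx0.le]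
    have h9 : θy * (x^2/8) ≤ θy * ((k:ℝ)*(m:ℝ)) := mul_le_mul_of_nonneg_left h8 hθy0.le
    linarith
  have hY : |Real.sqrt (x^2 * (2/9) / ((k:ℝ)*(m:ℝ))) - 1| ≤ η := by
    have h1 := sqrt_near hRb (by rw [hθydef]; exact min_le_right η (1/2))
    have h2 : θy ≤ η := by rw [hθydef]; exact min_le_left _ _
    linarith
  -- Z bound
  have hZeq : x^n * (1/3:ℝ)^k * (2/3:ℝ)^m / ((k:ℝ)^k * (m:ℝ)^m)
        * Real.exp (d^2 / (4/9*x))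
      = Real.exp ((x/3+d) * Real.log ((x/3)/(x/3+d)) + (2*x/3-d) * Real.log ((2*x/3)/(2*x/3-d))
          + 9*d^2/(4*x)) := by
    rw [show x^n = x^(k+m) by rw [hkm], Z_exp k m x hx0 (by linarith) (by linarith),
      ← Real.exp_add]
    congr 1
    rw [hkd, hmd]
    have hE : d^2/(4/9*x) = 9*d^2/(4*x) := by
      rw [div_eq_div_iff (by positivity : (0:ℝ) < 4/9*x).ne' (by positivity : (0:ℝ) < 4*x).ne']
      ring
    rw [hE]
  rw [hZeq]
  have hWb : |(x/3+d) * Real.log ((x/3)/(x/3+d)) + (2*x/3-d) * Real.log ((2*x/3)/(2*x/3-d))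
      + 9*d^2/(4*x)| ≤ θz := by
    refine le_trans (W_bound hx0 hd12) ?_
    have h1 : |d|^3 ≤ B^3 * (Real.sqrt x)^3 := by
      have := pow_le_pow_left₀ (abs_nonneg d) hdx 3
      rwa [mul_pow] at this
    have hsxz : 45*B^3/θz ≤ Real.sqrt x := by
      have h2 : Real.sqrt ((45*B^3/θz)^2) ≤ Real.sqrt x := Real.sqrt_le_sqrt hxc3
      rwa [Real.sqrt_sq (by positivity)] at h2
    have h3 : 45*B^3 ≤ θz * Real.sqrt x := by
      rw [div_le_iff₀ hθz0] at hsxz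
      linarith
    have e2 : x^2 = (Real.sqrt x)^3 * Real.sqrt x := by
      calc x^2 = (Real.sqrt x*Real.sqrt x)*(Real.sqrt x*Real.sqrt x) := by rw [hsq_x]; ring
        _ = (Real.sqrt x)^3 * Real.sqrt x := by ring
    calc 45*|d|^3/x^2 ≤ 45*(B^3*(Real.sqrt x)^3)/x^2 := by
          gcongr
      _ = 45*B^3/Real.sqrt x := by rw [e2]; field_simp
      _ ≤ θz := by
          rw [div_le_iff₀ hsx0]
          linarith
  have hZ : |Real.exp ((x/3+d) * Real.log ((x/3)/(x/3+d))
      + (2*x/3-d) * Real.log ((2*x/3)/(2*x/3-d)) + 9*d^2/(4*x)) - 1| ≤ η := by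
    have h1 := Real.abs_exp_sub_one_le (x := (x/3+d) * Real.log ((x/3)/(x/3+d))
      + (2*x/3-d) * Real.log ((2*x/3)/(2*x/3-d)) + 9*d^2/(4*x))
      (le_trans hWb (by rw [hθzdef]; exact min_le_right _ _))
    have h2 : θz ≤ η/2 := by rw [hθzdef]; exact min_le_left _ _
    linarith [hWb, h1]
  have := mul3_near hX hY hZ hη2
  have h6 : η ≤ ε/6 := by rw [hηdef]; exact min_le_left _ _
  linarith

/-- local CLT (De Moivre–Laplace) for the total length of dimers,
`R_N(h) := Σ_{(s,t): t-s=h} P̃_N(s,t) = Σ_{s≥0} P̃_N(s, s+h)`. -/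
theorem clt_total_length :
    ∀ B > (0 : ℝ), ∀ ε > (0 : ℝ), ∃ N₀ : ℕ, ∀ N : ℕ, N₀ ≤ N → ∀ h : ℕ,
      |(h : ℝ) - 1 / 3 * ((N : ℝ) - 1)| ≤ B * Real.sqrt (2 / 9 * ((N : ℝ) - 1)) →
      |(∑' s : ℕ, Ptilde N s (s + h))
          * Real.sqrt (4 / 9 * Real.pi * ((N : ℝ) - 1))
          * Real.exp (((h : ℝ) - 1 / 3 * ((N : ℝ) - 1)) ^ 2 / (4 / 9 * ((N : ℝ) - 1)))
        - 1| < ε := by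
  intro B hB ε hε
  obtain ⟨N₀, hN₀⟩ := binom_clt B ε hB hε
  refine ⟨N₀ + 1, ?_⟩
  intro N hN h hh
  have hN1 : 1 ≤ N := by omega
  have hcast : ((N-1:ℕ):ℝ) = (N:ℝ) - 1 := by
    rw [Nat.cast_sub hN1]
    norm_num
  rw [← hcast] at hh ⊢
  obtain ⟨h1, h2, h3⟩ := hN₀ (N-1) (by omega) h hh
  rw [tsum_Ptilde N h h1 (by omega)]
  exact h3
end

section
/- For every integer N ≥ 1, the mean total length of dimers equals (N-1)/3 exactly: Σ_{t=1}^{N} Σ_{s=1}^{⌊t/2⌋} (t-s) · P̃_N(s,t) = (N-1)/3. -/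
/-- Vandermonde: `∑_{s=1}^{N} C(N-k,s) C(k-1,s-1) = C(N-1,k)` for `1 ≤ k ≤ N`. -/
lemma vandermonde_aux (N k : ℕ) (hk1 : 1 ≤ k) (hkN : k ≤ N) :
    ∑ s ∈ Finset.Icc 1 N, (N - k).choose s * (k - 1).choose (s - 1)
      = (N - 1).choose k := by
  have hNk : N - 1 = (N - k) + (k - 1) := by omega
  rw [hNk, Nat.add_choose_eq, Finset.Nat.sum_antidiagonal_eq_sum_range_succ
    (fun i j => (N - k).choose i * (k - 1).choose j) k]
  -- restrict LHS to Icc 1 k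
  rw [show (∑ s ∈ Finset.Icc 1 N, (N - k).choose s * (k - 1).choose (s - 1))
      = ∑ s ∈ Finset.Icc 1 k, (N - k).choose s * (k - 1).choose (s - 1) from
    (Finset.sum_subset (Finset.Icc_subset_Icc_right hkN) (by
      intro s hs hs'
      simp only [Finset.mem_Icc] at hs hs'
      have : k - 1 < s - 1 := by omega
      rw [Nat.choose_eq_zero_of_lt this, mul_zero])).symm]
  -- restrict RHS to Icc 1 k
  rw [show (∑ i ∈ Finset.range k.succ, (N - k).choose i * (k - 1).choose (k - i))
      = ∑ i ∈ Finset.Icc 1 k, (N - k).choose i * (k - 1).choose (k - i) from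
    (Finset.sum_subset (by
      intro i hi; simp only [Finset.mem_Icc] at hi
      simp only [Finset.mem_range]; omega) (by
      intro i hi hi'
      simp only [Finset.mem_range] at hi
      simp only [Finset.mem_Icc] at hi'
      have hi0 : i = 0 := by omega
      subst hi0
      rw [Nat.choose_eq_zero_of_lt (by omega : k - 1 < k - 0), mul_zero])).symm]
  refine Finset.sum_congr rfl fun s hs => ?_
  simp only [Finset.mem_Icc] at hs
  congr 1
  rw [show k - s = (k - 1) - (s - 1) by omega]
  exact (Nat.choose_symm (by omega)).symm

/-- the mean total length of dimers equals `(N-1)/3` exactly. -/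
theorem mean_total_length (N : ℕ) (hN : 1 ≤ N) :
    ∑ t ∈ Finset.Icc 1 N, ∑ s ∈ Finset.Icc 1 (t / 2),
        (((t : ℝ) - (s : ℝ)) * Ptilde N s t)
      = ((N : ℝ) - 1) / 3 := by
  -- the reduced weight, with k = t - s
  set F : ℕ → ℕ → ℝ := fun s k =>
    (k : ℝ) * ((N - k).choose s : ℝ) * ((k - 1).choose (s - 1) : ℝ) * (1 / 2 : ℝ) ^ k
    with hF
  have hF0 : ∀ s, F s 0 = 0 := by intro s; simp [hF]
  -- Step 1: unfold Ptilde
  have step1 : ∑ t ∈ Finset.Icc 1 N, ∑ s ∈ Finset.Icc 1 (t / 2),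
        (((t : ℝ) - (s : ℝ)) * Ptilde N s t)
      = (2/3 : ℝ) ^ (N - 1) * ∑ t ∈ Finset.Icc 1 N, ∑ s ∈ Finset.Icc 1 (t / 2),
          F s (t - s) := by
    rw [Finset.mul_sum]
    refine Finset.sum_congr rfl fun t ht => ?_
    rw [Finset.mul_sum]
    refine Finset.sum_congr rfl fun s hs => ?_
    simp only [Finset.mem_Icc] at ht hs
    have hst : s ≤ t := by omega
    rw [Ptilde, if_neg (by omega), if_pos ⟨hs.1, hs.2, ht.1, ht.2⟩]
    have hcast : ((t : ℝ) - (s : ℝ)) = ((t - s : ℕ) : ℝ) := by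
      rw [Nat.cast_sub hst]
    have harg : N - t + s = N - (t - s) := by omega
    rw [hcast, harg, hF]
    ring
  rw [step1]
  -- Step 2: extend the inner sum over s to Icc 1 N
  have step2 : ∀ t ∈ Finset.Icc 1 N,
      ∑ s ∈ Finset.Icc 1 (t / 2), F s (t - s) = ∑ s ∈ Finset.Icc 1 N, F s (t - s) := by
    intro t ht
    simp only [Finset.mem_Icc] at ht
    refine Finset.sum_subset (Finset.Icc_subset_Icc_right (by omega)) ?_
    intro s hs hs'
    simp only [Finset.mem_Icc] at hs hs'
    have h2s : t < 2 * s := by omega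
    by_cases hts : t ≤ s
    · rw [show t - s = 0 by omega, hF0]
    · have : (t - s) - 1 < s - 1 := by omega
      simp only [hF, Nat.choose_eq_zero_of_lt this, Nat.cast_zero, mul_zero, zero_mul]
  rw [Finset.sum_congr rfl step2, Finset.sum_comm]
  -- Step 4: for fixed s, reindex t ↦ k = t - s and extend
  have step4 : ∀ s ∈ Finset.Icc 1 N,
      ∑ t ∈ Finset.Icc 1 N, F s (t - s) = ∑ k ∈ Finset.Icc 1 N, F s k := by
    intro s hs
    simp only [Finset.mem_Icc] at hs
    have h1 : ∑ t ∈ Finset.Icc 1 N, F s (t - s)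
        = ∑ t ∈ Finset.Icc (s + 1) N, F s (t - s) := by
      refine (Finset.sum_subset (Finset.Icc_subset_Icc_left (by omega)) ?_).symm
      intro t ht ht'
      simp only [Finset.mem_Icc] at ht ht'
      rw [show t - s = 0 by omega, hF0]
    have h2 : ∑ t ∈ Finset.Icc (s + 1) N, F s (t - s)
        = ∑ k ∈ Finset.Icc 1 (N - s), F s k := by
      rw [show Finset.Icc (s+1) N = (Finset.Icc 1 (N-s)).map (addRightEmbedding s) by
        rw [Finset.map_add_right_Icc]; congr 1 <;> omega]
      rw [Finset.sum_map]
      refine Finset.sum_congr rfl fun k hk => ?_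
      simp [addRightEmbedding]
    have h3 : ∑ k ∈ Finset.Icc 1 (N - s), F s k = ∑ k ∈ Finset.Icc 1 N, F s k := by
      refine Finset.sum_subset (Finset.Icc_subset_Icc_right (by omega)) ?_
      intro k hk hk'
      simp only [Finset.mem_Icc] at hk hk'
      have : N - k < s := by omega
      simp only [hF, Nat.choose_eq_zero_of_lt this, Nat.cast_zero, mul_zero, zero_mul]
    rw [h1, h2, h3]
  rw [Finset.sum_congr rfl step4, Finset.sum_comm]
  -- Step 6: Vandermonde on inner sum
  have step6 : ∀ k ∈ Finset.Icc 1 N,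
      ∑ s ∈ Finset.Icc 1 N, F s k
        = (k : ℝ) * ((N - 1).choose k : ℝ) * (1 / 2 : ℝ) ^ k := by
    intro k hk
    simp only [Finset.mem_Icc] at hk
    have : ∑ s ∈ Finset.Icc 1 N, F s k
        = ((k : ℝ) * (1 / 2 : ℝ) ^ k) *
          ∑ s ∈ Finset.Icc 1 N, (((N - k).choose s * (k - 1).choose (s - 1) : ℕ) : ℝ) := by
      rw [Finset.mul_sum]
      refine Finset.sum_congr rfl fun s _ => ?_
      simp only [hF]; push_cast; ring
    rw [this, ← Nat.cast_sum, vandermonde_aux N k hk.1 hk.2]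
    ring
  rw [Finset.sum_congr rfl step6]
  -- Step 7: the final binomial sum
  rcases Nat.lt_or_ge N 2 with hN2 | hN2
  · interval_cases N
    · simp
  · obtain ⟨M, rfl⟩ : ∃ M, N = M + 2 := ⟨N - 2, by omega⟩
    have hterm : ∀ k ∈ Finset.Icc 1 (M + 2),
        (k : ℝ) * ((M + 1).choose k : ℝ) * (1 / 2 : ℝ) ^ k
          = ((M : ℝ) + 1) * (M.choose (k - 1) : ℝ) * (1 / 2 : ℝ) ^ k := by
      intro k hk
      simp only [Finset.mem_Icc] at hk
      obtain ⟨j, rfl⟩ : ∃ j, k = j + 1 := ⟨k - 1, by omega⟩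
      have hnat := Nat.add_one_mul_choose_eq M j
      have h2 := congrArg (fun n : ℕ => (n : ℝ)) hnat
      push_cast [Nat.succ_eq_add_one] at h2
      simp only [Nat.add_sub_cancel]
      push_cast
      rw [h2]
      ring
    rw [show (M + 2 : ℕ) - 1 = M + 1 from rfl,
      Finset.sum_congr rfl hterm]
    have hIcc : ∑ k ∈ Finset.Icc 1 (M + 2),
        ((M : ℝ) + 1) * (M.choose (k - 1) : ℝ) * (1 / 2 : ℝ) ^ k
        = ∑ i ∈ Finset.range (M + 2),
            ((M : ℝ) + 1) * (M.choose i : ℝ) * (1 / 2 : ℝ) ^ (1 + i) := by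
      rw [← Finset.Ico_add_one_right_eq_Icc, Finset.sum_Ico_eq_sum_range]
      refine Finset.sum_congr (by congr 1) fun i _ => ?_
      simp only [Nat.add_sub_cancel_left]
    rw [hIcc, Finset.sum_range_succ, Nat.choose_eq_zero_of_lt (by omega), Nat.cast_zero,
      mul_zero, zero_mul, add_zero]
    have hbin : ∑ i ∈ Finset.range (M + 1), ((M : ℝ) + 1) * (M.choose i : ℝ) * (1 / 2 : ℝ) ^ (1 + i)
        = ((M : ℝ) + 1) * (1 / 2 : ℝ) *
          ∑ i ∈ Finset.range (M + 1), (1 / 2 : ℝ) ^ i * (M.choose i : ℝ) := by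
      rw [Finset.mul_sum]
      refine Finset.sum_congr rfl fun i _ => ?_
      rw [pow_add]; ring
    have hpow : ∑ i ∈ Finset.range (M + 1), (1 / 2 : ℝ) ^ i * (M.choose i : ℝ)
        = (3 / 2 : ℝ) ^ M := by
      have h := add_pow (1 / 2 : ℝ) 1 M
      simp only [one_pow, mul_one] at h
      rw [← h]; norm_num
    rw [hbin, hpow]
    have hinv : (2 / 3 : ℝ) ^ M * (3 / 2 : ℝ) ^ M = 1 := by
      rw [← mul_pow]; norm_num
    have hc : ((M + 2 : ℕ) : ℝ) - 1 = (M : ℝ) + 1 := by push_cast; ring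
    rw [hc, pow_succ]
    linear_combination ((M : ℝ) + 1) / 3 * hinv
end

section
/- The mean number of single points (sites not occupied by dimers) is asymptotically (4/9)(N+1): lim_{N→∞} [ Γ_N - (4/9)(N+1) ] = 0, where Γ_N := N·(2/3)^{N-1} + Σ_{t=1}^{N} Σ_{s=1}^{⌊t/2⌋} (N-t) · P̃_N(s,t). In particular, to first order in N, the expected number of single points is asymptotically twice the expected number of dimers. -/
open Finset

noncomputable def eTerm (m t s : ℕ) : ℝ :=
  ((m + s).choose s : ℝ) * ((t - s - 1).choose (s - 1) : ℝ) * (1 / 2 : ℝ) ^ (t - s)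
noncomputable def hTerm (m t s : ℕ) : ℝ :=
  ((m + (s - 1)).choose (s - 1) : ℝ) * ((t - s - 1).choose (s - 1) : ℝ) * (1 / 2 : ℝ) ^ (t - s)
noncomputable def eS (m t : ℕ) : ℝ := ∑ s ∈ Icc 1 t, eTerm m t s
noncomputable def hS (m t : ℕ) : ℝ := ∑ s ∈ Icc 1 t, hTerm m t s

lemma sum_split_bot {a b : ℕ} (h : a ≤ b) (f : ℕ → ℝ) :
    ∑ s ∈ Icc a b, f s = f a + ∑ s ∈ Icc (a+1) b, f s := by
  rw [Finset.Icc_add_one_left_eq_Ioc, ← Finset.Ioc_insert_left h, Finset.sum_insert (by simp)]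
lemma sum_shift (f : ℕ → ℝ) (a b k : ℕ) :
    ∑ s ∈ Icc (a+k) (b+k), f s = ∑ s ∈ Icc a b, f (s+k) := by
  rw [← Finset.map_add_right_Icc, Finset.sum_map]; rfl


lemma hS_rec (m T : ℕ) :
    hS m (T+4) = 1/2 * hS m (T+3) + 1/2 * eS m (T+2) := by
  set g1 : ℕ → ℝ := fun s =>
    ((m + (s - 1)).choose (s - 1) : ℝ) * (((T+4) - s - 2).choose (s - 1) : ℝ)
      * (1 / 2 : ℝ) ^ ((T+4) - s) with hg1
  set g2 : ℕ → ℝ := fun s =>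
    ((m + (s - 1)).choose (s - 1) : ℝ) * (((T+4) - s - 2).choose (s - 2) : ℝ)
      * (1 / 2 : ℝ) ^ ((T+4) - s) with hg2
  have h1 : hS m (T+4) = (1/2:ℝ)^(T+3) + ∑ s ∈ Icc 2 (T+4), hTerm m (T+4) s := by
    rw [hS, sum_split_bot (by omega)]
    congr 1
    rw [hTerm]
    norm_num
  have h2 : ∑ s ∈ Icc 2 (T+4), hTerm m (T+4) s
      = (∑ s ∈ Icc 2 (T+4), g1 s) + ∑ s ∈ Icc 2 (T+4), g2 s := by
    rw [← Finset.sum_add_distrib]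
    refine Finset.sum_congr rfl (fun s hs => ?_)
    simp only [Finset.mem_Icc] at hs
    simp only [hTerm, hg1, hg2]
    have hch : ((T+4) - s - 1).choose (s - 1)
        = ((T+4) - s - 2).choose (s - 2) + ((T+4) - s - 2).choose (s - 1) := by
      rcases le_or_gt (s + 2) (T + 4) with h | h
      · have e1 : (T+4) - s - 1 = ((T+4) - s - 2) + 1 := by omega
        have e2 : s - 1 = (s - 2) + 1 := by omega
        rw [e1, e2, Nat.choose_succ_succ, Nat.succ_eq_add_one, ← e2]
      · rw [Nat.choose_eq_zero_of_lt (by omega), Nat.choose_eq_zero_of_lt (by omega),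
          Nat.choose_eq_zero_of_lt (by omega)]
    rw [hch]
    push_cast
    ring
  have h3 : ∑ s ∈ Icc 2 (T+4), g1 s = 1/2 * hS m (T+3) - (1/2:ℝ)^(T+3) := by
    rw [Finset.sum_Icc_succ_top (by omega)]
    have hz : g1 (T+4) = 0 := by
      simp only [hg1]
      rw [show T+4 - (T+4) - 2 = 0 by omega,
        Nat.choose_eq_zero_of_lt (show 0 < T+4-1 by omega)]
      norm_num
    rw [hz, add_zero]
    have hsplit : hS m (T+3) = (1/2:ℝ)^(T+2) + ∑ s ∈ Icc 2 (T+3), hTerm m (T+3) s := by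
      rw [hS, sum_split_bot (by omega)]
      congr 1
      rw [hTerm]; norm_num
    rw [hsplit]
    have : ∑ s ∈ Icc 2 (T+3), g1 s = ∑ s ∈ Icc 2 (T+3), (1/2) * hTerm m (T+3) s := by
      refine Finset.sum_congr rfl (fun s hs => ?_)
      simp only [Finset.mem_Icc] at hs
      simp only [hg1, hTerm]
      rw [show (T+4) - s - 2 = (T+3) - s - 1 by omega,
        show (T+4) - s = ((T+3) - s) + 1 by omega, pow_succ]
      ring
    rw [this, ← Finset.mul_sum]
    ring
  have h4 : ∑ s ∈ Icc 2 (T+4), g2 s = 1/2 * eS m (T+2) := by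
    rw [show (2:ℕ) = 1 + 1 by rfl, show T + 4 = (T+3) + 1 by rfl, sum_shift]
    rw [Finset.sum_Icc_succ_top (by omega)]
    have hz : g2 ((T+3) + 1) = 0 := by
      simp only [hg2]
      rw [show (T+4) - (T+3+1) - 2 = 0 by omega,
        Nat.choose_eq_zero_of_lt (show 0 < T+3+1-2 by omega)]
      norm_num
    rw [hz, add_zero, eS]
    have : ∑ j ∈ Icc 1 (T+2), g2 (j+1) = ∑ j ∈ Icc 1 (T+2), (1/2) * eTerm m (T+2) j := by
      refine Finset.sum_congr rfl (fun j hj => ?_)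
      simp only [Finset.mem_Icc] at hj
      simp only [hg2, eTerm]
      rw [show (j+1) - 1 = j by omega, show (j+1) - 2 = j - 1 by omega,
        show (T+4) - (j+1) - 2 = (T+2) - j - 1 by omega,
        show (T+4) - (j+1) = ((T+2) - j) + 1 by omega, pow_succ]
      ring
    rw [this, ← Finset.mul_sum]
    try ring
  rw [h1, h2, h3, h4]
  ring

noncomputable def dA (N : ℕ) : ℝ := ∑ t ∈ Icc 2 N, eS (N - t) t
lemma hS_two (m : ℕ) : hS m 2 = 1/2 := by
  rw [hS, show Finset.Icc 1 2 = {1, 2} by decide, Finset.sum_pair (by norm_num)]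
  simp [hTerm]

lemma hS_three (m : ℕ) : hS m 3 = 1/4 := by
  rw [hS, show Finset.Icc 1 3 = {1, 2, 3} by decide]
  rw [Finset.sum_insert (by decide), Finset.sum_pair (by norm_num)]
  simp [hTerm]
  norm_num

lemma eS_two (m : ℕ) : eS m 2 = ((m:ℝ)+1)/2 := by
  rw [eS, show Finset.Icc 1 2 = {1, 2} by decide, Finset.sum_pair (by norm_num)]
  simp [eTerm]
  ring

lemma eS_three (m : ℕ) : eS m 3 = ((m:ℝ)+1)/4 := by
  rw [eS, show Finset.Icc 1 3 = {1, 2, 3} by decide]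
  rw [Finset.sum_insert (by decide), Finset.sum_pair (by norm_num)]
  simp [eTerm]
  ring

lemma eS_succ (m t : ℕ) : eS (m+1) t = eS m t + hS (m+1) t := by
  rw [eS, eS, hS, ← Finset.sum_add_distrib]
  refine Finset.sum_congr rfl (fun s hs => ?_)
  simp only [Finset.mem_Icc] at hs
  rw [eTerm, eTerm, hTerm]
  have h3 : m + 1 + (s - 1) = m + s := by omega
  have hch : (m + 1 + s).choose s = (m+s).choose s + (m + 1 + (s-1)).choose (s-1) := by
    rw [h3]
    have h1 : m + 1 + s = (m + s) + 1 := by omega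
    have h2 : s = (s - 1) + 1 := by omega
    rw [h1]
    conv_lhs => rw [h2]
    rw [Nat.choose_succ_succ]
    conv_lhs => rw [Nat.succ_eq_add_one, ← h2]
    exact Nat.add_comm _ _
  rw [hch]
  push_cast
  ring

lemma eS_zero (t : ℕ) : eS 0 t = hS 0 t := by
  refine Finset.sum_congr rfl (fun s hs => ?_)
  rw [eTerm, hTerm]
  simp

noncomputable def dB (N : ℕ) : ℝ := ∑ t ∈ Icc 2 N, (t:ℝ) * eS (N - t) t
noncomputable def dD (N : ℕ) : ℝ := ∑ t ∈ Icc 2 N, hS (N - t) t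
noncomputable def dK (N : ℕ) : ℝ := ∑ t ∈ Icc 2 N, (t:ℝ) * hS (N - t) t

lemma Astep (N : ℕ) : dA (N+2) = dA (N+1) + dD (N+2) := by
  rw [dA, dA, dD, show N+2 = (N+1)+1 by omega,
    Finset.sum_Icc_succ_top (show 2 ≤ (N+1)+1 by omega),
    Finset.sum_Icc_succ_top (show 2 ≤ (N+1)+1 by omega)]
  rw [Nat.sub_self, eS_zero]
  have : ∑ t ∈ Icc 2 (N+1), eS ((N+1)+1-t) t
      = ∑ t ∈ Icc 2 (N+1), (eS ((N+1)-t) t + hS ((N+1)+1-t) t) := by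
    refine Finset.sum_congr rfl (fun t ht => ?_)
    simp only [Finset.mem_Icc] at ht
    rw [show (N+1)+1-t = ((N+1)-t)+1 by omega, eS_succ,
      show ((N+1)-t)+1 = (N+1)+1-t by omega]
  rw [this, Finset.sum_add_distrib]
  ring

lemma Bstep (N : ℕ) : dB (N+2) = dB (N+1) + dK (N+2) := by
  rw [dB, dB, dK, show N+2 = (N+1)+1 by omega,
    Finset.sum_Icc_succ_top (show 2 ≤ (N+1)+1 by omega),
    Finset.sum_Icc_succ_top (show 2 ≤ (N+1)+1 by omega)]
  rw [Nat.sub_self, eS_zero]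
  have : ∑ t ∈ Icc 2 (N+1), (t:ℝ) * eS ((N+1)+1-t) t
      = ∑ t ∈ Icc 2 (N+1), ((t:ℝ) * eS ((N+1)-t) t + (t:ℝ) * hS ((N+1)+1-t) t) := by
    refine Finset.sum_congr rfl (fun t ht => ?_)
    simp only [Finset.mem_Icc] at ht
    rw [show (N+1)+1-t = ((N+1)-t)+1 by omega, eS_succ,
      show ((N+1)-t)+1 = (N+1)+1-t by omega]
    ring
  rw [this, Finset.sum_add_distrib]
  ring

lemma Dstep (M : ℕ) : dD (M+4) = 1/2 + 1/2 * dD (M+3) + 1/2 * dA (M+2) := by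
  rw [dD, sum_split_bot (by omega), show (2:ℕ)+1 = 3 by norm_num,
    sum_split_bot (by omega), show (3:ℕ)+1 = 4 by norm_num,
    show M+4-2 = M+2 by omega, show M+4-3 = M+1 by omega, hS_two, hS_three]
  have hrec : ∑ t ∈ Icc 4 (M+4), hS (M+4-t) t
      = ∑ t ∈ Icc 4 (M+4), (1/2 * hS (M+4-t) (t-1) + 1/2 * eS (M+4-t) (t-2)) := by
    refine Finset.sum_congr rfl (fun t ht => ?_)
    simp only [Finset.mem_Icc] at ht
    obtain ⟨u, rfl⟩ : ∃ u, t = u + 4 := ⟨t - 4, by omega⟩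
    rw [show u+4-1 = u+3 by omega, show u+4-2 = u+2 by omega, hS_rec]
  rw [hrec, Finset.sum_add_distrib]
  have e1 : ∑ t ∈ Icc 4 (M+4), 1/2 * hS (M+4-t) (t-1)
      = 1/2 * (dD (M+3) - hS (M+1) 2) := by
    rw [show (4:ℕ) = 3 + 1 by rfl, show M + 4 = (M+3) + 1 by rfl, sum_shift]
    have : ∑ j ∈ Icc 3 (M+3), 1/2 * hS (M+3+1-(j+1)) ((j+1)-1)
        = ∑ j ∈ Icc 3 (M+3), 1/2 * hS (M+3-j) j := by
      refine Finset.sum_congr rfl (fun j hj => ?_)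
      rw [show M+3+1-(j+1) = M+3-j by omega, show (j+1)-1 = j by omega]
    rw [this, ← Finset.mul_sum]
    have hD : dD (M+3) = hS (M+1) 2 + ∑ j ∈ Icc 3 (M+3), hS (M+3-j) j := by
      rw [dD, sum_split_bot (by omega), show (2:ℕ)+1 = 3 by norm_num,
        show M+3-2 = M+1 by omega]
    rw [hD]
    ring
  have e2 : ∑ t ∈ Icc 4 (M+4), 1/2 * eS (M+4-t) (t-2) = 1/2 * dA (M+2) := by
    rw [show (4:ℕ) = 2 + 2 by rfl, show M + 4 = (M+2) + 2 by rfl, sum_shift]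
    have : ∑ j ∈ Icc 2 (M+2), 1/2 * eS (M+2+2-(j+2)) ((j+2)-2)
        = ∑ j ∈ Icc 2 (M+2), 1/2 * eS (M+2-j) j := by
      refine Finset.sum_congr rfl (fun j hj => ?_)
      rw [show M+2+2-(j+2) = M+2-j by omega, show (j+2)-2 = j by omega]
    rw [this, ← Finset.mul_sum, dA]
  rw [e1, e2, hS_two]
  ring

lemma Kstep (M : ℕ) : dK (M+4)
    = 1 + 1/2 * dK (M+3) + 1/2 * dD (M+3) + 1/2 * dB (M+2) + dA (M+2) := by
  rw [dK, sum_split_bot (by omega), show (2:ℕ)+1 = 3 by norm_num,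
    sum_split_bot (by omega), show (3:ℕ)+1 = 4 by norm_num,
    show M+4-2 = M+2 by omega, show M+4-3 = M+1 by omega, hS_two, hS_three]
  have hrec : ∑ t ∈ Icc 4 (M+4), (t:ℝ) * hS (M+4-t) t
      = ∑ t ∈ Icc 4 (M+4), ((t:ℝ) * (1/2 * hS (M+4-t) (t-1)) + (t:ℝ) * (1/2 * eS (M+4-t) (t-2))) := by
    refine Finset.sum_congr rfl (fun t ht => ?_)
    simp only [Finset.mem_Icc] at ht
    obtain ⟨u, rfl⟩ : ∃ u, t = u + 4 := ⟨t - 4, by omega⟩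
    rw [show u+4-1 = u+3 by omega, show u+4-2 = u+2 by omega, hS_rec]
    ring
  rw [hrec, Finset.sum_add_distrib]
  have e1 : ∑ t ∈ Icc 4 (M+4), (t:ℝ) * (1/2 * hS (M+4-t) (t-1))
      = 1/2 * (dK (M+3) - 2 * hS (M+1) 2) + 1/2 * (dD (M+3) - hS (M+1) 2) := by
    rw [show (4:ℕ) = 3 + 1 by rfl, show M + 4 = (M+3) + 1 by rfl, sum_shift]
    have : ∑ j ∈ Icc 3 (M+3), ((j+1:ℕ):ℝ) * (1/2 * hS (M+3+1-(j+1)) ((j+1)-1))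
        = ∑ j ∈ Icc 3 (M+3), (1/2 * ((j:ℝ) * hS (M+3-j) j) + 1/2 * hS (M+3-j) j) := by
      refine Finset.sum_congr rfl (fun j hj => ?_)
      rw [show M+3+1-(j+1) = M+3-j by omega, show (j+1)-1 = j by omega]
      push_cast
      ring
    rw [this, Finset.sum_add_distrib, ← Finset.mul_sum, ← Finset.mul_sum]
    have hK : dK (M+3) = 2 * hS (M+1) 2 + ∑ j ∈ Icc 3 (M+3), (j:ℝ) * hS (M+3-j) j := by
      rw [dK, sum_split_bot (by omega), show (2:ℕ)+1 = 3 by norm_num,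
        show M+3-2 = M+1 by omega]
      norm_num
    have hD : dD (M+3) = hS (M+1) 2 + ∑ j ∈ Icc 3 (M+3), hS (M+3-j) j := by
      rw [dD, sum_split_bot (by omega), show (2:ℕ)+1 = 3 by norm_num,
        show M+3-2 = M+1 by omega]
    rw [hK, hD]
    ring
  have e2 : ∑ t ∈ Icc 4 (M+4), (t:ℝ) * (1/2 * eS (M+4-t) (t-2))
      = 1/2 * dB (M+2) + dA (M+2) := by
    rw [show (4:ℕ) = 2 + 2 by rfl, show M + 4 = (M+2) + 2 by rfl, sum_shift]
    have : ∑ j ∈ Icc 2 (M+2), ((j+2:ℕ):ℝ) * (1/2 * eS (M+2+2-(j+2)) ((j+2)-2))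
        = ∑ j ∈ Icc 2 (M+2), (1/2 * ((j:ℝ) * eS (M+2-j) j) + eS (M+2-j) j) := by
      refine Finset.sum_congr rfl (fun j hj => ?_)
      rw [show M+2+2-(j+2) = M+2-j by omega, show (j+2)-2 = j by omega]
      push_cast
      ring
    rw [this, Finset.sum_add_distrib, ← Finset.mul_sum, dB, dA]
  rw [e1, e2, hS_two]
  push_cast
  ring

lemma dA0 : dA 0 = 0 := by rw [dA, Finset.Icc_eq_empty (by omega), Finset.sum_empty]
lemma dA1 : dA 1 = 0 := by rw [dA, Finset.Icc_eq_empty (by omega), Finset.sum_empty]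
lemma dA2 : dA 2 = 1/2 := by
  rw [dA, show Finset.Icc 2 2 = ({2} : Finset ℕ) by decide, Finset.sum_singleton]
  norm_num [eS_two]
lemma dA3 : dA 3 = 5/4 := by
  rw [dA, show Finset.Icc 2 3 = ({2, 3} : Finset ℕ) by decide, Finset.sum_pair (by norm_num)]
  norm_num [eS_two, eS_three]
lemma dD2 : dD 2 = 1/2 := by
  rw [dD, show Finset.Icc 2 2 = ({2} : Finset ℕ) by decide, Finset.sum_singleton, hS_two]
lemma dD3 : dD 3 = 3/4 := by
  rw [dD, show Finset.Icc 2 3 = ({2, 3} : Finset ℕ) by decide, Finset.sum_pair (by norm_num),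
    hS_two, hS_three]
  norm_num
lemma dB2 : dB 2 = 1 := by
  rw [dB, show Finset.Icc 2 2 = ({2} : Finset ℕ) by decide, Finset.sum_singleton]
  norm_num [eS_two]
lemma dB3 : dB 3 = 11/4 := by
  rw [dB, show Finset.Icc 2 3 = ({2, 3} : Finset ℕ) by decide, Finset.sum_pair (by norm_num)]
  norm_num [eS_two, eS_three]
  try ring
lemma dK3 : dK 3 = 7/4 := by
  rw [dK, show Finset.Icc 2 3 = ({2, 3} : Finset ℕ) by decide, Finset.sum_pair (by norm_num),
    hS_two, hS_three]
  norm_num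

lemma cAD (N : ℕ) : dA N = (3/2:ℝ)^(N-1) - 1 ∧ (2 ≤ N → dD N = 1/2 * (3/2:ℝ)^(N-2)) := by
  induction N using Nat.strong_induction_on with
  | _ N ih =>
    rcases lt_or_ge N 4 with h | h
    · interval_cases N
      · exact ⟨by rw [dA0]; norm_num, by omega⟩
      · exact ⟨by rw [dA1]; norm_num, by omega⟩
      · exact ⟨by rw [dA2]; norm_num, fun _ => by rw [dD2]; norm_num⟩
      · exact ⟨by rw [dA3]; norm_num, fun _ => by rw [dD3]; norm_num⟩
    · obtain ⟨M, rfl⟩ : ∃ M, N = M + 4 := ⟨N - 4, by omega⟩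
      have hD3 := (ih (M+3) (by omega)).2 (by omega)
      have hA2 := (ih (M+2) (by omega)).1
      have hA3 := (ih (M+3) (by omega)).1
      rw [show (M+3)-2 = M+1 by omega] at hD3
      rw [show (M+2)-1 = M+1 by omega] at hA2
      rw [show (M+3)-1 = M+2 by omega] at hA3
      have hD : dD (M+4) = 1/2 * (3/2:ℝ)^(M+2) := by
        rw [Dstep, hD3, hA2, show M+2 = (M+1)+1 by omega, pow_succ]
        ring
      constructor
      · have hstep := Astep (M+2)
        rw [show M+2+2 = M+4 by omega, show M+2+1 = M+3 by omega] at hstep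
        rw [hstep, hA3, hD, show (M+4)-1 = M+3 by omega,
          show M+3 = (M+2)+1 by omega, pow_succ]
        ring
      · intro _
        rw [hD, show (M+4)-2 = M+2 by omega]

lemma cBK (N : ℕ) :
    (2 ≤ N → dB N = (5*(N:ℝ)-4)/9 * (3/2:ℝ)^(N-1))
      ∧ (3 ≤ N → dK N = (5*(N:ℝ)+6)/18 * (3/2:ℝ)^(N-2)) := by
  induction N using Nat.strong_induction_on with
  | _ N ih =>
    rcases lt_or_ge N 4 with h | h
    · interval_cases N
      · exact ⟨by omega, by omega⟩
      · exact ⟨by omega, by omega⟩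
      · exact ⟨fun _ => by rw [dB2]; norm_num, by omega⟩
      · exact ⟨fun _ => by rw [dB3]; norm_num, fun _ => by rw [dK3]; norm_num⟩
    · obtain ⟨M, rfl⟩ : ∃ M, N = M + 4 := ⟨N - 4, by omega⟩
      have hK3 := (ih (M+3) (by omega)).2 (by omega)
      have hB2 := (ih (M+2) (by omega)).1 (by omega)
      have hB3 := (ih (M+3) (by omega)).1 (by omega)
      rw [show (M+3)-2 = M+1 by omega] at hK3
      rw [show (M+2)-1 = M+1 by omega] at hB2
      rw [show (M+3)-1 = M+2 by omega] at hB3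
      have hD3 := (cAD (M+3)).2 (by omega)
      have hA2 := (cAD (M+2)).1
      rw [show (M+3)-2 = M+1 by omega] at hD3
      rw [show (M+2)-1 = M+1 by omega] at hA2
      have hK : dK (M+4) = (5*((M:ℝ)+4)+6)/18 * (3/2:ℝ)^(M+2) := by
        rw [Kstep, hK3, hD3, hB2, hA2, show M+2 = (M+1)+1 by omega, pow_succ]
        push_cast
        ring
      constructor
      · intro _
        have hstep := Bstep (M+2)
        rw [show M+2+2 = M+4 by omega, show M+2+1 = M+3 by omega] at hstep
        rw [hstep, hB3, hK, show (M+4)-1 = M+3 by omega,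
          show M+3 = (M+2)+1 by omega, pow_succ]
        push_cast
        ring
      · intro _
        rw [hK, show (M+4)-2 = M+2 by omega]
        push_cast
        ring


lemma inner_ext (m t : ℕ) (ht : 2 ≤ t) :
    ∑ s ∈ Icc 1 (t/2), eTerm m t s = eS m t := by
  apply Finset.sum_subset
  · exact Finset.Icc_subset_Icc_right (by omega)
  · intro s hs hns
    simp only [Finset.mem_Icc] at hs hns
    rw [eTerm, Nat.choose_eq_zero_of_lt (show t - s - 1 < s - 1 by omega)]
    norm_num

lemma key (N : ℕ) (hN : 2 ≤ N) :
    ((N : ℝ) * (2 / 3 : ℝ) ^ (N - 1)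
        + ∑ t ∈ Finset.Icc 1 N, ∑ s ∈ Finset.Icc 1 (t / 2),
            ((N : ℝ) - (t : ℝ)) * Ptilde N s t)
      - 4 / 9 * ((N : ℝ) + 1) = 0 := by
  have hsum : ∑ t ∈ Finset.Icc 1 N, ∑ s ∈ Finset.Icc 1 (t / 2),
      ((N : ℝ) - (t : ℝ)) * Ptilde N s t
      = ((2/3:ℝ)^(N-1) * (N:ℝ)) * dA N - (2/3:ℝ)^(N-1) * dB N := by
    rw [sum_split_bot (show 1 ≤ N by omega)]
    rw [show (1:ℕ)/2 = 0 by norm_num, Finset.Icc_eq_empty (by omega),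
      Finset.sum_empty, zero_add]
    have hterm : ∀ t ∈ Icc 2 N, ∑ s ∈ Finset.Icc 1 (t / 2),
        ((N : ℝ) - (t : ℝ)) * Ptilde N s t
        = ((2/3:ℝ)^(N-1) * (N:ℝ)) * eS (N-t) t
            - (2/3:ℝ)^(N-1) * ((t:ℝ) * eS (N-t) t) := by
      intro t ht
      simp only [Finset.mem_Icc] at ht
      have h1 : ∀ s ∈ Icc 1 (t/2), ((N : ℝ) - (t : ℝ)) * Ptilde N s t
          = (((N : ℝ) - (t : ℝ)) * (2/3:ℝ)^(N-1)) * eTerm (N-t) t s := by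
        intro s hs
        simp only [Finset.mem_Icc] at hs
        rw [Ptilde, if_neg (by omega), if_pos ⟨hs.1, hs.2, by omega, ht.2⟩, eTerm]
        ring
      rw [Finset.sum_congr rfl h1, ← Finset.mul_sum, inner_ext _ _ ht.1]
      ring
    rw [Finset.sum_congr rfl hterm, Finset.sum_sub_distrib,
      ← Finset.mul_sum, ← Finset.mul_sum, dA, dB]
  rw [hsum, (cAD N).1, (cBK N).1 hN]
  have hab : (2/3:ℝ)^(N-1) * (3/2:ℝ)^(N-1) = 1 := by
    rw [← mul_pow]
    norm_num
  linear_combination ((4*(N:ℝ)+4)/9) * hab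


/-- the mean number of single points
`Γ_N := N·(2/3)^{N-1} + Σ_{t=1}^{N} Σ_{s=1}^{⌊t/2⌋} (N-t)·P̃_N(s,t)`
is asymptotically `(4/9)(N+1)`. -/
theorem single_points_mean_asymptotics :
    Filter.Tendsto
      (fun N : ℕ =>
        ((N : ℝ) * (2 / 3 : ℝ) ^ (N - 1)
            + ∑ t ∈ Finset.Icc 1 N, ∑ s ∈ Finset.Icc 1 (t / 2),
                ((N : ℝ) - (t : ℝ)) * Ptilde N s t)
          - 4 / 9 * ((N : ℝ) + 1))
      Filter.atTop (nhds 0) := by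
  apply Filter.Tendsto.congr' _ tendsto_const_nhds
  filter_upwards [Filter.eventually_ge_atTop 2] with N hN
  exact (key N hN).symm
end
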